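/- Let f, g : ℝⁿ → ℝ be C³ on B(x⁰, Δ̄), let S ∈ ℝ^{n×m} and T ∈ ℝ^{n×k} have full row rank with B(x⁰+sⁱ; Δ_T) ⊂ B(x⁰; Δ̄) for all i. Suppose the gradient approximations satisfy ‖∇_s f(x⁰;T) − ∇f(x⁰)‖ ≤ E_f Δ_u and ‖∇_s g(x⁰;T) − ∇g(x⁰)‖ ≤ E_g Δ_u, and the Hessian approximations satisfy ‖∇²_s f(x⁰;S,T) − ∇²f(x⁰)‖ ≤ E_F Δ_u and ‖∇²_s g(x⁰;S,T) − ∇²g(x⁰)‖ ≤ E_G Δ_u. Define the simplex calculus Hessian ∇²_{sc}(fg) = g(x⁰)∇²_s f + f(x⁰)∇²_s g + ∇_s f(∇_s g)ᵀ + ∇_s g(∇_s f)ᵀ. Then ‖∇²_{sc}(fg)(x⁰;S,T) − ∇²(fg)(x⁰)‖ ≤ (E_F|g(x⁰)| + E_G|f(x⁰)| + 2(E_f E_g Δ_u + E_g‖∇f(x⁰)‖ + E_f‖∇g(x⁰)‖))Δ_u. -/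

import Mathlib

open Matrix Metric

/-- The induced 2-norm (operator norm) of a matrix. -/
noncomputable def opNorm {m n : ℕ} (A : Matrix (Fin m) (Fin n) ℝ) : ℝ :=
  ‖LinearMap.toContinuousLinearMap (Matrix.toEuclideanLin A)‖

/-- The Hessian matrix of f at x. -/
noncomputable def hess {n : ℕ} (f : EuclideanSpace ℝ (Fin n) → ℝ)
    (x : EuclideanSpace ℝ (Fin n)) : Matrix (Fin n) (Fin n) ℝ :=
  Matrix.of fun i j =>
    iteratedFDeriv ℝ 2 f x ![EuclideanSpace.single i 1, EuclideanSpace.single j 1]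

/-- The generalized simplex gradient ∇_s f(y;T) = (Tᵀ)† δ_f(y;T); since T has
full row rank, (Tᵀ)† = (T Tᵀ)⁻¹ T. -/
noncomputable def simplexGrad {n k : ℕ} (f : EuclideanSpace ℝ (Fin n) → ℝ)
    (t : Fin k → EuclideanSpace ℝ (Fin n)) (T : Matrix (Fin n) (Fin k) ℝ)
    (y : EuclideanSpace ℝ (Fin n)) : Fin n → ℝ :=
  ((T * Tᵀ)⁻¹ * T).mulVec fun j => f (y + t j) - f y

/-- The nested-set Hessian ∇²_s f(x⁰;S,T) = (Sᵀ)† δ_{∇_s f}(x⁰;S,T); since S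
has full row rank, (Sᵀ)† = (S Sᵀ)⁻¹ S.  The i-th row of δ_{∇_s f} is
(∇_s f(x⁰+sⁱ;T) − ∇_s f(x⁰;T))ᵀ. -/
noncomputable def nestedSetHessian {n m k : ℕ} (f : EuclideanSpace ℝ (Fin n) → ℝ)
    (s : Fin m → EuclideanSpace ℝ (Fin n)) (S : Matrix (Fin n) (Fin m) ℝ)
    (t : Fin k → EuclideanSpace ℝ (Fin n)) (T : Matrix (Fin n) (Fin k) ℝ)
    (x0 : EuclideanSpace ℝ (Fin n)) : Matrix (Fin n) (Fin n) ℝ :=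
  ((S * Sᵀ)⁻¹ * S) *
    Matrix.of fun i j => simplexGrad f t T (x0 + s i) j - simplexGrad f t T x0 j

/-- Reinterpret a plain vector as an element of Euclidean space. -/
noncomputable def toE {n : ℕ} (v : Fin n → ℝ) : EuclideanSpace ℝ (Fin n) :=
  (WithLp.equiv 2 (Fin n → ℝ)).symm v

lemma opNorm_add_le {m n : ℕ} (A B : Matrix (Fin m) (Fin n) ℝ) :
    opNorm (A + B) ≤ opNorm A + opNorm B := by
  unfold opNorm; rw [map_add, map_add]; exact norm_add_le _ _

lemma opNorm_smul {m n : ℕ} (c : ℝ) (A : Matrix (Fin m) (Fin n) ℝ) :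
    opNorm (c • A) = |c| * opNorm A := by
  unfold opNorm; rw [_root_.map_smul, _root_.map_smul]
  rw [norm_smul c (LinearMap.toContinuousLinearMap (Matrix.toEuclideanLin A)),
    Real.norm_eq_abs]

lemma opNorm_vecMulVec {n : ℕ} (u v : Fin n → ℝ) :
    opNorm (vecMulVec u v) ≤ ‖toE u‖ * ‖toE v‖ := by
  unfold opNorm
  apply ContinuousLinearMap.opNorm_le_bound _ (by positivity)
  intro x
  have h1 : (LinearMap.toContinuousLinearMap (Matrix.toEuclideanLin (vecMulVec u v))) x
      = (inner (𝕜 := ℝ) (toE v) x) • toE u := by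
    simp only [LinearMap.coe_toContinuousLinearMap', Matrix.toEuclideanLin_apply]
    ext i
    simp [toE, vecMulVec, Matrix.mulVec, dotProduct, PiLp.inner_apply,
      Finset.mul_sum, mul_comm, mul_left_comm, mul_assoc]
  rw [h1, norm_smul]
  calc ‖inner (𝕜 := ℝ) (toE v) x‖ * ‖toE u‖ ≤ (‖toE v‖ * ‖x‖) * ‖toE u‖ := by
        gcongr; exact norm_inner_le_norm _ _
    _ = ‖toE u‖ * ‖toE v‖ * ‖x‖ := by ring

lemma gradient_apply' {n : ℕ} (f : EuclideanSpace ℝ (Fin n) → ℝ)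
    (x : EuclideanSpace ℝ (Fin n)) (i : Fin n) :
    gradient f x i = fderiv ℝ f x (EuclideanSpace.single i 1) := by
  have h : fderiv ℝ f x (EuclideanSpace.single i 1)
      = inner (𝕜 := ℝ) (gradient f x) (EuclideanSpace.single i 1) := by
    rw [gradient]
    simp [InnerProductSpace.toDual_symm_apply]
  rw [h, real_inner_comm]
  simp [EuclideanSpace.inner_single_left, -inner_gradient_right]

lemma hess_mul {n : ℕ} (f g : EuclideanSpace ℝ (Fin n) → ℝ)
    (x0 : EuclideanSpace ℝ (Fin n)) (U : Set (EuclideanSpace ℝ (Fin n)))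
    (hU : IsOpen U) (hx : x0 ∈ U)
    (hf : ContDiffOn ℝ 3 f U) (hg : ContDiffOn ℝ 3 g U) :
    hess (fun x => f x * g x) x0
      = g x0 • hess f x0 + f x0 • hess g x0
        + vecMulVec (fun i => gradient f x0 i) (fun i => gradient g x0 i)
        + vecMulVec (fun i => gradient g x0 i) (fun i => gradient f x0 i) := by
  have hUx : U ∈ nhds x0 := hU.mem_nhds hx
  have hdf : ∀ y ∈ U, DifferentiableAt ℝ f y := fun y hy =>
    ((hf.differentiableOn (by norm_num)).differentiableAt (hU.mem_nhds hy))
  have hdg : ∀ y ∈ U, DifferentiableAt ℝ g y := fun y hy =>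
    ((hg.differentiableOn (by norm_num)).differentiableAt (hU.mem_nhds hy))
  have hf' : ContDiffOn ℝ 2 (fderiv ℝ f) U := hf.fderiv_of_isOpen hU (by norm_num)
  have hg' : ContDiffOn ℝ 2 (fderiv ℝ g) U := hg.fderiv_of_isOpen hU (by norm_num)
  have hdf' : DifferentiableAt ℝ (fderiv ℝ f) x0 :=
    (hf'.differentiableOn (by norm_num)).differentiableAt hUx
  have hdg' : DifferentiableAt ℝ (fderiv ℝ g) x0 :=
    (hg'.differentiableOn (by norm_num)).differentiableAt hUx
  have heq : (fun y => fderiv ℝ (fun x => f x * g x) y)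
      =ᶠ[nhds x0] (fun y => f y • fderiv ℝ g y + g y • fderiv ℝ f y) := by
    filter_upwards [hUx] with y hy
    exact fderiv_mul (hdf y hy) (hdg y hy)
  have key : fderiv ℝ (fderiv ℝ (fun x => f x * g x)) x0
      = fderiv ℝ (fun y => f y • fderiv ℝ g y + g y • fderiv ℝ f y) x0 :=
    heq.fderiv_eq
  have h1 : HasFDerivAt (fun y => f y • fderiv ℝ g y)
      (f x0 • fderiv ℝ (fderiv ℝ g) x0 + (fderiv ℝ f x0).smulRight (fderiv ℝ g x0)) x0 :=
    ((hdf x0 hx).hasFDerivAt).smul (hdg'.hasFDerivAt)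
  have h2 : HasFDerivAt (fun y => g y • fderiv ℝ f y)
      (g x0 • fderiv ℝ (fderiv ℝ f) x0 + (fderiv ℝ g x0).smulRight (fderiv ℝ f x0)) x0 :=
    ((hdg x0 hx).hasFDerivAt).smul (hdf'.hasFDerivAt)
  have key2 := (h1.add h2).fderiv
  ext i j
  simp only [hess, Matrix.of_apply, Matrix.add_apply, Matrix.smul_apply, vecMulVec_apply,
    smul_eq_mul]
  rw [iteratedFDeriv_two_apply, iteratedFDeriv_two_apply, iteratedFDeriv_two_apply]
  simp only [Matrix.cons_val_zero, Matrix.cons_val_one, Matrix.head_cons]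
  rw [key, show (fun y => f y • fderiv ℝ g y + g y • fderiv ℝ f y)
      = ((fun y => f y • fderiv ℝ g y) + fun y => g y • fderiv ℝ f y) from rfl, key2]
  simp only [ContinuousLinearMap.add_apply, ContinuousLinearMap.smul_apply,
    ContinuousLinearMap.smulRight_apply, ContinuousLinearMap.coe_smul', Pi.smul_apply,
    smul_eq_mul, gradient_apply']
  ring

theorem simplex_calculus_hessian_product_rule_error_bound {n m k : ℕ}
    (f g : EuclideanSpace ℝ (Fin n) → ℝ) (x0 : EuclideanSpace ℝ (Fin n))
    (Δbar ΔS ΔT Ef Eg EF EG : ℝ)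
    (s : Fin m → EuclideanSpace ℝ (Fin n)) (S : Matrix (Fin n) (Fin m) ℝ)
    (hSdef : S = Matrix.of fun i j => s j i) (hSrank : S.rank = n)
    (t : Fin k → EuclideanSpace ℝ (Fin n)) (T : Matrix (Fin n) (Fin k) ℝ)
    (hTdef : T = Matrix.of fun i j => t j i) (hTrank : T.rank = n)
    (hΔS : IsGreatest (Set.range fun i => ‖s i‖) ΔS)
    (hΔT : IsGreatest (Set.range fun j => ‖t j‖) ΔT)
    (hball : ∀ i, ball (x0 + s i) ΔT ⊆ ball x0 Δbar)
    (hf : ContDiffOn ℝ 3 f (ball x0 Δbar)) (hg : ContDiffOn ℝ 3 g (ball x0 Δbar))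
    (hEf : ‖toE (simplexGrad f t T x0) - gradient f x0‖ ≤ Ef * max ΔS ΔT)
    (hEg : ‖toE (simplexGrad g t T x0) - gradient g x0‖ ≤ Eg * max ΔS ΔT)
    (hEF : opNorm (nestedSetHessian f s S t T x0 - hess f x0) ≤ EF * max ΔS ΔT)
    (hEG : opNorm (nestedSetHessian g s S t T x0 - hess g x0) ≤ EG * max ΔS ΔT) :
    opNorm (g x0 • nestedSetHessian f s S t T x0
        + f x0 • nestedSetHessian g s S t T x0
        + vecMulVec (simplexGrad f t T x0) (simplexGrad g t T x0)
        + vecMulVec (simplexGrad g t T x0) (simplexGrad f t T x0)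
        - hess (fun x => f x * g x) x0)
      ≤ (EF * |g x0| + EG * |f x0|
          + 2 * (Ef * Eg * max ΔS ΔT + Eg * ‖gradient f x0‖
              + Ef * ‖gradient g x0‖)) * max ΔS ΔT := by
  set Δ := max ΔS ΔT with hΔdef
  -- basic nonnegativity
  obtain ⟨⟨i0, hi0⟩, hSub⟩ := hΔS
  have hΔS0 : 0 ≤ ΔS := hi0 ▸ norm_nonneg _
  have hΔ0 : 0 ≤ Δ := le_trans hΔS0 (le_max_left _ _)
  have ha0 : 0 ≤ ‖toE (simplexGrad f t T x0) - gradient f x0‖ := norm_nonneg _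
  have hb0 : 0 ≤ ‖toE (simplexGrad g t T x0) - gradient g x0‖ := norm_nonneg _
  have hA0 : 0 ≤ opNorm (nestedSetHessian f s S t T x0 - hess f x0) := norm_nonneg _
  have hB0 : 0 ≤ opNorm (nestedSetHessian g s S t T x0 - hess g x0) := norm_nonneg _
  rcases Nat.eq_zero_or_pos n with hn | hn
  · subst hn
    have hz : (LinearMap.toContinuousLinearMap (Matrix.toEuclideanLin
        (g x0 • nestedSetHessian f s S t T x0
        + f x0 • nestedSetHessian g s S t T x0
        + vecMulVec (simplexGrad f t T x0) (simplexGrad g t T x0)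
        + vecMulVec (simplexGrad g t T x0) (simplexGrad f t T x0)
        - hess (fun x => f x * g x) x0))) = 0 := by
      ext x i
      exact i.elim0
    have : opNorm (g x0 • nestedSetHessian f s S t T x0
        + f x0 • nestedSetHessian g s S t T x0
        + vecMulVec (simplexGrad f t T x0) (simplexGrad g t T x0)
        + vecMulVec (simplexGrad g t T x0) (simplexGrad f t T x0)
        - hess (fun x => f x * g x) x0) = 0 := by
      unfold opNorm; rw [hz, norm_zero]
    rw [this]
    nlinarith [mul_nonneg (le_trans hA0 hEF) (abs_nonneg (g x0)),
      mul_nonneg (le_trans hB0 hEG) (abs_nonneg (f x0)),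
      mul_nonneg (le_trans ha0 hEf) (le_trans hb0 hEg),
      mul_nonneg (le_trans hb0 hEg) (norm_nonneg (gradient f x0)),
      mul_nonneg (le_trans ha0 hEf) (norm_nonneg (gradient g x0))]
  · -- n ≥ 1 : the ball is a genuine neighbourhood of x0
    have hT0 : ∃ j, t j ≠ 0 := by
      by_contra h
      push_neg at h
      have : T = 0 := by
        rw [hTdef]; ext i j; simp [h j]
      rw [this, Matrix.rank_zero] at hTrank
      omega
    obtain ⟨j0, hj0⟩ := hT0
    have hΔT0 : 0 < ΔT := lt_of_lt_of_le (norm_pos_iff.mpr hj0) (hΔT.2 ⟨j0, rfl⟩)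
    have hmem : x0 + s i0 ∈ ball x0 Δbar := hball i0 (mem_ball_self hΔT0)
    have hΔbar : 0 < Δbar := lt_of_le_of_lt dist_nonneg (mem_ball.mp hmem)
    have hx0 : x0 ∈ ball x0 Δbar := mem_ball_self hΔbar
    -- abbreviations
    set af := simplexGrad f t T x0 with haf
    set ag := simplexGrad g t T x0 with hag
    set pf : Fin n → ℝ := fun i => gradient f x0 i with hpf
    set pg : Fin n → ℝ := fun i => gradient g x0 i with hpg
    have hprod := hess_mul f g x0 (ball x0 Δbar) isOpen_ball hx0 hf hg
    have hM : g x0 • nestedSetHessian f s S t T x0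
        + f x0 • nestedSetHessian g s S t T x0
        + vecMulVec af ag + vecMulVec ag af
        - hess (fun x => f x * g x) x0
        = g x0 • (nestedSetHessian f s S t T x0 - hess f x0)
          + f x0 • (nestedSetHessian g s S t T x0 - hess g x0)
          + (vecMulVec (af - pf) (ag - pg) + vecMulVec (af - pf) pg
              + vecMulVec pf (ag - pg))
          + (vecMulVec (ag - pg) (af - pf) + vecMulVec (ag - pg) pf
              + vecMulVec pg (af - pf)) := by
      rw [hprod]
      ext i j
      simp only [Matrix.sub_apply, Matrix.add_apply, Matrix.smul_apply, vecMulVec_apply,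
        Pi.sub_apply, smul_eq_mul]
      ring
    rw [hM]
    have b1 : opNorm (vecMulVec (af - pf) (ag - pg))
        ≤ ‖toE af - gradient f x0‖ * ‖toE ag - gradient g x0‖ := opNorm_vecMulVec _ _
    have b2 : opNorm (vecMulVec (af - pf) pg)
        ≤ ‖toE af - gradient f x0‖ * ‖gradient g x0‖ := opNorm_vecMulVec _ _
    have b3 : opNorm (vecMulVec pf (ag - pg))
        ≤ ‖gradient f x0‖ * ‖toE ag - gradient g x0‖ := opNorm_vecMulVec _ _
    have b4 : opNorm (vecMulVec (ag - pg) (af - pf))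
        ≤ ‖toE ag - gradient g x0‖ * ‖toE af - gradient f x0‖ := opNorm_vecMulVec _ _
    have b5 : opNorm (vecMulVec (ag - pg) pf)
        ≤ ‖toE ag - gradient g x0‖ * ‖gradient f x0‖ := opNorm_vecMulVec _ _
    have b6 : opNorm (vecMulVec pg (af - pf))
        ≤ ‖gradient g x0‖ * ‖toE af - gradient f x0‖ := opNorm_vecMulVec _ _
    set a := ‖toE af - gradient f x0‖
    set b := ‖toE ag - gradient g x0‖
    calc opNorm (g x0 • (nestedSetHessian f s S t T x0 - hess f x0)
          + f x0 • (nestedSetHessian g s S t T x0 - hess g x0)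
          + (vecMulVec (af - pf) (ag - pg) + vecMulVec (af - pf) pg
              + vecMulVec pf (ag - pg))
          + (vecMulVec (ag - pg) (af - pf) + vecMulVec (ag - pg) pf
              + vecMulVec pg (af - pf)))
        ≤ |g x0| * opNorm (nestedSetHessian f s S t T x0 - hess f x0)
          + |f x0| * opNorm (nestedSetHessian g s S t T x0 - hess g x0)
          + (opNorm (vecMulVec (af - pf) (ag - pg)) + opNorm (vecMulVec (af - pf) pg)
              + opNorm (vecMulVec pf (ag - pg)))
          + (opNorm (vecMulVec (ag - pg) (af - pf)) + opNorm (vecMulVec (ag - pg) pf)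
              + opNorm (vecMulVec pg (af - pf))) := by
          refine le_trans (opNorm_add_le _ _) ?_
          gcongr ?_ + ?_
          · refine le_trans (opNorm_add_le _ _) ?_
            gcongr ?_ + ?_
            · refine le_trans (opNorm_add_le _ _) ?_
              gcongr ?_ + ?_
              · exact le_of_eq (opNorm_smul _ _)
              · exact le_of_eq (opNorm_smul _ _)
            · refine le_trans (opNorm_add_le _ _) ?_
              gcongr
              exact opNorm_add_le _ _
          · refine le_trans (opNorm_add_le _ _) ?_
            gcongr
            exact opNorm_add_le _ _
      _ ≤ (EF * |g x0| + EG * |f x0|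
          + 2 * (Ef * Eg * Δ + Eg * ‖gradient f x0‖ + Ef * ‖gradient g x0‖)) * Δ := by
          linarith [mul_le_mul_of_nonneg_left hEF (abs_nonneg (g x0)),
            mul_le_mul_of_nonneg_left hEG (abs_nonneg (f x0)),
            mul_le_mul hEf hEg hb0 (le_trans ha0 hEf),
            mul_le_mul_of_nonneg_right hEf (norm_nonneg (gradient g x0)),
            mul_le_mul_of_nonneg_right hEg (norm_nonneg (gradient f x0)),
            b1, b2, b3, b4, b5, b6, ha0, hb0]
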